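/- Let p be a prime and 2 ≤ l ≤ p+1. Then v_{lp+1} ≡ -1 (mod p) and v_{lp+2} ≡ -1 (mod p). -/

import Mathlib

open Polynomial Finset

noncomputable def v (n : ℕ) : ℤ :=
  if n = 0 then -1 else
  ((1 - X) * ∏ j ∈ Finset.range (2 * n - 2),
      (C ((2 * n : ℤ) - 3 - (j : ℤ)) + C (j : ℤ) * X)).coeff (n - 1)


section basic
variable {p : ℕ} [Fact p.Prime]

lemma sub_one_pow_p : ((X : (ZMod p)[X]) - 1) ^ p = X ^ p - 1 := by
  rw [sub_pow_char, one_pow]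

lemma sub_one_pow_p2 : ((X : (ZMod p)[X]) - 1) ^ (p * p) = X ^ (p * p) - 1 := by
  rw [pow_mul, sub_one_pow_p, sub_pow_char, one_pow, ← pow_mul]

lemma coeff_sub_one_pow {R : Type*} [CommRing R] (n m : ℕ) :
    (((X : R[X]) - 1) ^ n).coeff m = (-1) ^ (n - m) * n.choose m := by
  have : ((X : R[X]) - 1) = X + C (-1) := by simp [sub_eq_add_neg]
  rw [this, coeff_X_add_C_pow]

lemma natDegree_sub_one_pow_le {R : Type*} [CommRing R] (n : ℕ) :
    (((X : R[X]) - 1) ^ n).natDegree ≤ n := by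
  refine (natDegree_pow_le).trans ?_
  have : ((X : R[X]) - 1) = X - C 1 := by simp
  rw [this]
  calc n * (X - C (1:R)).natDegree ≤ n * 1 := by
        exact Nat.mul_le_mul_left n (natDegree_X_sub_C_le 1)
    _ = n := mul_one n

end basic

section prodlem
variable {p : ℕ} [Fact p.Prime]

lemma prod_core (e : ZMod p) (he : e ≠ 0) :
    ∏ r ∈ range p, (C (r : ZMod p) * X + C e) = C e * (1 - X ^ (p - 1)) := by
  have hp0 : 2 ≤ p := (Fact.out : p.Prime).two_le
  have hcard : Fintype.card (ZMod p) = p := ZMod.card p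
  rw [← sub_eq_zero]
  apply eq_zero_of_natDegree_lt_card_of_eval_eq_zero _ (Function.injective_id)
  · intro a
    simp only [id_eq, eval_sub, eval_prod, eval_add, eval_mul, eval_C, eval_X, eval_one,
      eval_pow, eval_mul, eval_sub]
    rcases eq_or_ne a 0 with rfl | ha
    · simp [Finset.prod_const, ZMod.pow_card, zero_pow (show p - 1 ≠ 0 by omega)]
    · rw [ZMod.pow_card_sub_one_eq_one ha, sub_self, mul_zero]
      have hmem : (-e * a⁻¹).val ∈ range p := mem_range.mpr (ZMod.val_lt _)
      rw [Finset.prod_eq_zero hmem, sub_zero]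
      rw [ZMod.natCast_rightInverse _]
      field_simp
      ring
  · rw [hcard]
    have h1 : (∏ r ∈ range p, (C (r : ZMod p) * X + C e)).natDegree ≤ p - 1 := by
      refine (natDegree_prod_le _ _).trans ?_
      obtain ⟨q, rfl⟩ : ∃ q, p = q + 1 := ⟨p - 1, by omega⟩
      rw [Finset.sum_range_succ']
      have h0 : (C ((0:ℕ) : ZMod (q+1)) * X + C e).natDegree = 0 := by
        norm_num
      rw [h0, add_zero]
      calc ∑ i ∈ range q, (C ((i+1 : ℕ) : ZMod (q+1)) * X + C e).natDegree
          ≤ ∑ _i ∈ range q, 1 := by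
            refine Finset.sum_le_sum fun i _ => ?_
            refine (natDegree_add_le _ _).trans ?_
            have hx : (C ((i+1 : ℕ) : ZMod (q+1)) * X).natDegree ≤ 1 :=
              (natDegree_C_mul_le _ _).trans natDegree_X_le
            exact max_le hx (by simp)
        _ = q := by simp
        _ ≤ q + 1 - 1 := by omega
    have h2 : (C e * (1 - X ^ (p - 1) : (ZMod p)[X])).natDegree ≤ p - 1 := by
      refine (natDegree_C_mul_le _ _).trans ?_
      have : (1 - X ^ (p-1) : (ZMod p)[X]) = -(X ^ (p-1) - C 1) := by rw [map_one]; ring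
      rw [this, natDegree_neg, natDegree_X_pow_sub_C]
    exact lt_of_le_of_lt (natDegree_sub_le _ _) (max_lt (by omega) (by omega))

end prodlem

section prodlem2
variable {p : ℕ} [Fact p.Prime]

lemma prod_neg_one :
    ∏ r ∈ range p, (C (-1 - (r : ZMod p)) + C (r : ZMod p) * X) =
      ((X : (ZMod p)[X]) - 1) ^ (p - 1) - 1 := by
  have h := congrArg (aeval ((X : (ZMod p)[X]) - 1)) (prod_core (-1 : ZMod p) (neg_ne_zero.mpr one_ne_zero))
  rw [map_prod] at h
  have hfac : ∀ r : ℕ, (aeval ((X : (ZMod p)[X]) - 1)) (C ((r : ZMod p)) * X + C (-1 : ZMod p))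
      = C (-1 - (r : ZMod p)) + C (r : ZMod p) * X := by
    intro r
    simp only [map_add, map_mul, aeval_C, aeval_X, Polynomial.algebraMap_eq, map_neg, map_one,
      map_sub]
    ring
  rw [Finset.prod_congr rfl (fun r _ => hfac r)] at h
  rw [h]
  simp only [map_mul, map_sub, map_one, map_pow, aeval_C, aeval_X, Polynomial.algebraMap_eq,
    map_neg]
  ring

lemma prod_pos_one :
    ∏ r ∈ range p, (C (1 - (r : ZMod p)) + C (r : ZMod p) * X) =
      1 - ((X : (ZMod p)[X]) - 1) ^ (p - 1) := by
  have h := congrArg (aeval ((X : (ZMod p)[X]) - 1)) (prod_core (1 : ZMod p) one_ne_zero)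
  rw [map_prod] at h
  have hfac : ∀ r : ℕ, (aeval ((X : (ZMod p)[X]) - 1)) (C ((r : ZMod p)) * X + C (1 : ZMod p))
      = C (1 - (r : ZMod p)) + C (r : ZMod p) * X := by
    intro r
    simp only [map_add, map_mul, aeval_C, aeval_X, Polynomial.algebraMap_eq, map_one, map_sub]
    ring
  rw [Finset.prod_congr rfl (fun r _ => hfac r)] at h
  rw [h]
  simp only [map_mul, map_sub, map_one, map_pow, aeval_C, aeval_X, Polynomial.algebraMap_eq]
  ring

end prodlem2

lemma prod_range_mul_p {M : Type*} [CommMonoid M] (p : ℕ) (f : ZMod p → M) (m : ℕ) :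
    ∏ j ∈ range (m * p), f ((j : ℕ) : ZMod p) = (∏ j ∈ range p, f ((j : ℕ) : ZMod p)) ^ m := by
  induction m with
  | zero => simp
  | succ m ih =>
    have : (m + 1) * p = m * p + p := by ring
    rw [this, Finset.prod_range_add, ih, pow_succ]
    congr 1
    refine Finset.prod_congr rfl fun j _ => ?_
    congr 1
    push_cast [ZMod.natCast_self]
    ring

lemma alt0 (n m : ℕ) (hmn : m < n) :
    ∑ k ∈ range (n + 1), (-1 : ℤ) ^ k * (n.choose k) * (k.choose m) = 0 := by
  have hsplit : n + 1 = m + (n + 1 - m) := by omega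
  rw [hsplit, Finset.sum_range_add]
  have h1 : ∑ k ∈ range m, (-1 : ℤ) ^ k * (n.choose k) * (k.choose m) = 0 := by
    refine Finset.sum_eq_zero fun k hk => ?_
    rw [Nat.choose_eq_zero_of_lt (mem_range.mp hk)]
    simp
  rw [h1, zero_add]
  have h2 : ∀ j ∈ range (n + 1 - m), (-1 : ℤ) ^ (m + j) * (n.choose (m + j)) * ((m + j).choose m)
      = ((-1 : ℤ) ^ m * n.choose m) * ((-1 : ℤ) ^ j * ((n - m).choose j)) := by
    intro j hj
    have hj' : j ≤ n - m := by have := mem_range.mp hj; omega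
    have hc := Nat.choose_mul (n := n) (show m ≤ m + j by omega)
    rw [Nat.add_sub_cancel_left] at hc
    have key : (n.choose (m+j) : ℤ) * ((m+j).choose m) = (n.choose m : ℤ) * ((n-m).choose j) := by
      exact_mod_cast congrArg (Nat.cast (R := ℤ)) hc
    rw [pow_add]
    linear_combination ((-1:ℤ)^m * (-1)^j) * key
  rw [Finset.sum_congr rfl h2, ← Finset.mul_sum]
  have h3 : ∑ j ∈ range (n + 1 - m), (-1 : ℤ) ^ j * ((n - m).choose j) = 0 := by
    have : n + 1 - m = (n - m) + 1 := by omega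
    rw [this]
    exact Int.alternating_sum_range_choose_of_ne (show n - m ≠ 0 by omega)
  rw [h3, mul_zero]

lemma Tsum (n : ℕ) (d : ℕ) : ∀ m : ℕ, 1 ≤ m → m + d + 1 = n →
    ∑ k ∈ range (n + 1), (-1 : ℤ) ^ k * (n.choose k) * ((k - 1).choose m) = (-1) ^ (m + 1) := by
  induction d with
  | zero =>
    intro m hm hmn
    rw [Finset.sum_eq_single n]
    · rw [Nat.choose_self]
      have : n - 1 = m := by omega
      rw [this, Nat.choose_self]
      have : n = m + 1 := by omega
      rw [this]
      push_cast
      ring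
    · intro k hk hkn
      have hk' : k < n + 1 := mem_range.mp hk
      rcases Nat.eq_zero_or_pos k with rfl | hk0
      · rw [Nat.choose_eq_zero_of_lt (show (0:ℕ) - 1 < m by omega)]; ring
      · rw [Nat.choose_eq_zero_of_lt (show k - 1 < m by omega)]; ring
    · intro h; exact absurd (self_mem_range_succ n) h
  | succ d ih =>
    intro m hm hmn
    have ih' := ih (m + 1) (by omega) (by omega)
    have hcomb : (∑ k ∈ range (n + 1), (-1 : ℤ) ^ k * (n.choose k) * ((k - 1).choose m))
        + (∑ k ∈ range (n + 1), (-1 : ℤ) ^ k * (n.choose k) * ((k - 1).choose (m + 1)))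
        = ∑ k ∈ range (n + 1), (-1 : ℤ) ^ k * (n.choose k) * (k.choose (m + 1)) := by
      rw [← Finset.sum_add_distrib]
      refine Finset.sum_congr rfl fun k _ => ?_
      have hpas : ((k - 1).choose m : ℤ) + ((k - 1).choose (m + 1)) = (k.choose (m + 1)) := by
        rcases Nat.eq_zero_or_pos k with rfl | hk0
        · simp [Nat.choose_eq_zero_of_lt (show 0 < m by omega),
            Nat.choose_eq_zero_of_lt (show 0 < m + 1 by omega)]
        · obtain ⟨j, rfl⟩ : ∃ j, k = j + 1 := ⟨k - 1, by omega⟩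
          rw [Nat.add_sub_cancel]
          exact_mod_cast congrArg (Nat.cast (R := ℤ)) (Nat.choose_succ_succ' j m).symm
      linear_combination ((-1:ℤ)^k * (n.choose k)) * hpas
    rw [alt0 n (m + 1) (by omega)] at hcomb
    have : (∑ k ∈ range (n + 1), (-1 : ℤ) ^ k * (n.choose k) * ((k - 1).choose m))
        = -(-1 : ℤ) ^ (m + 1 + 1) := by
      rw [← ih']; linarith [hcomb]
    rw [this]; ring

lemma lucas_zmod {p : ℕ} [Fact p.Prime] (n k : ℕ) :
    ((n.choose k : ℕ) : ZMod p) =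
      (((n % p).choose (k % p) : ℕ) : ZMod p) * (((n / p).choose (k / p) : ℕ) : ZMod p) := by
  have h := Choose.choose_modEq_choose_mod_mul_choose_div (p := p) (n := n) (k := k)
  have h2 := (ZMod.intCast_eq_intCast_iff _ _ _).mpr h
  push_cast at h2 ⊢
  exact h2

lemma moddiv {p a : ℕ} (h1 : p ≤ a) (h2 : a < 2 * p) : a % p = a - p ∧ a / p = 1 := by
  obtain ⟨b, rfl⟩ : ∃ b, a = b + p := ⟨a - p, by omega⟩
  have hb : b < p := by omega
  constructor
  · rw [Nat.add_mod_right, Nat.mod_eq_of_lt hb]; omega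
  · rw [Nat.add_div_right _ (by omega), Nat.div_eq_of_lt hb]

lemma natDegree_Xp_pow_le {p : ℕ} [Fact p.Prime] (a : ℕ) :
    (((X : (ZMod p)[X]) ^ p - 1) ^ a).natDegree ≤ p * a := by
  calc (((X : (ZMod p)[X]) ^ p - 1) ^ a).natDegree ≤ a * ((X : (ZMod p)[X]) ^ p - 1).natDegree :=
        natDegree_pow_le
    _ ≤ a * p := Nat.mul_le_mul_left a (by
        rw [show ((X : (ZMod p)[X]) ^ p - 1) = X ^ p - C 1 from by rw [map_one],
          natDegree_X_pow_sub_C])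
    _ = p * a := mul_comm a p

lemma coeff_pow_sub_one_mul {p : ℕ} [Fact p.Prime] (a b m : ℕ) :
    ((((X : (ZMod p)[X]) ^ p - 1) ^ a) * (X - 1) ^ b).coeff m
      = ∑ i ∈ range (a + 1), (-1) ^ (i + a) * (a.choose i : ZMod p) *
          (if p * i ≤ m then ((((X : (ZMod p)[X]) - 1) ^ b).coeff (m - p * i)) else 0) := by
  rw [sub_pow, Finset.sum_mul, finset_sum_coeff]
  refine Finset.sum_congr rfl fun i _ => ?_
  have h1 : (-1 : (ZMod p)[X]) ^ (i + a) * (X ^ p) ^ i * 1 ^ (a - i) * (a.choose i : (ZMod p)[X])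
        * (X - 1) ^ b
      = C ((-1) ^ (i + a) * (a.choose i : ZMod p)) * ((X - 1) ^ b * X ^ (p * i)) := by
    rw [← pow_mul, map_mul, map_pow, map_neg, map_one, C_eq_natCast]
    ring
  rw [h1, coeff_C_mul, coeff_mul_X_pow']

lemma C1 {p l k : ℕ} [Fact p.Prime] (hodd : Odd p) (hl2 : 2 ≤ l) (hlp : l ≤ p)
    (hk : k ≤ 2 * l) :
    ((((X : (ZMod p)[X]) - 1)) ^ (k * (p - 1) + 1)).coeff (l * p)
      = (-1) ^ (p + l) * (((k - 1).choose l : ℕ) : ZMod p) := by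
  have hp2 : 2 ≤ p := (Fact.out : p.Prime).two_le
  rcases lt_or_ge k 2 with hk2 | hk2
  · -- k = 0 or 1 : both sides vanish
    have h1 : k * (p - 1) ≤ 1 * (p - 1) := Nat.mul_le_mul_right _ (by omega)
    have h2 : 2 * p ≤ l * p := Nat.mul_le_mul_right p hl2
    rw [coeff_sub_one_pow, Nat.choose_eq_zero_of_lt (show k * (p-1) + 1 < l * p by omega),
      Nat.choose_eq_zero_of_lt (show k - 1 < l by omega)]
    push_cast; ring
  rcases le_or_gt k (p + 1) with hkp | hkp
  · -- main case 2 ≤ k ≤ p + 1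
    have hd : k * (p - 1) + 1 = p * (k - 1) + (p + 1 - k) := by
      zify [show 1 ≤ p by omega, show 1 ≤ k by omega, hkp]; ring
    rw [hd, pow_add, pow_mul, sub_one_pow_p, coeff_pow_sub_one_mul]
    have hkk : k - 1 + 1 = k := by omega
    rw [hkk, Finset.sum_eq_single l]
    · rw [if_pos (le_of_eq (mul_comm p l)), mul_comm l p, Nat.sub_self, coeff_sub_one_pow,
        Nat.sub_zero, Nat.choose_zero_right]
      rcases lt_or_ge l k with hlk | hlk
      · have hsgn : (-1 : ZMod p) ^ (l + (k - 1)) * (-1) ^ (p + 1 - k) = (-1) ^ (p + l) := by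
          rw [← pow_add]
          have hpar : ((-1 : ZMod p)) ^ (l + (k - 1) + (p + 1 - k)) = (-1) ^ (p + l) := by
            have hEq : l + (k - 1) + (p + 1 - k) = p + l := by omega
            rw [hEq]
          exact hpar
        push_cast
        linear_combination (((k - 1).choose l : ZMod p)) * hsgn
      · rw [Nat.choose_eq_zero_of_lt (show k - 1 < l by omega)]
        push_cast; ring
    · intro i hi hil
      rcases lt_or_ge i l with h1 | h1
      · rw [if_pos (by rw [mul_comm l p]; exact Nat.mul_le_mul_left p h1.le)]
        have hge : p * i + p ≤ l * p := by
          calc p * i + p = p * (i + 1) := by ring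
            _ ≤ p * l := Nat.mul_le_mul_left p (by omega)
            _ = l * p := mul_comm p l
        rw [coeff_sub_one_pow, Nat.choose_eq_zero_of_lt (show p + 1 - k < l * p - p * i by omega)]
        push_cast; ring
      · have h2 : l < i := by omega
        rw [if_neg (by
          intro hcon
          have h3 : p * (l + 1) ≤ p * i := Nat.mul_le_mul_left p h2
          have h4 : p * (l + 1) = l * p + p := by ring
          omega)]
        ring
    · intro hl
      rw [Nat.choose_eq_zero_of_lt (show k - 1 < l by
        simp only [mem_range] at hl; omega)]
      push_cast; ring
  · -- case p + 2 ≤ k ≤ 2 * l, l ≤ p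
    have hk2p : k ≤ 2 * p := by omega
    have hd : k * (p - 1) + 1 = p * p + (p * (k - p - 2) + (2 * p + 1 - k)) := by
      zify [show 1 ≤ p by omega, show p ≤ k by omega, show 2 ≤ k - p by omega,
        show k ≤ 2*p+1 by omega]
      ring
    have hXps : ((X : (ZMod p)[X]) - 1) ^ (p * (k - p - 2)) = (X ^ p - 1) ^ (k - p - 2) := by
      rw [pow_mul, sub_one_pow_p]
    rw [hd, pow_add, pow_add, sub_one_pow_p2, hXps]
    rw [sub_mul, one_mul, coeff_sub]
    have hG : ((((X : (ZMod p)[X]) ^ p - 1) ^ (k - p - 2)) * (X - 1) ^ (2 * p + 1 - k)).coeff (l * p)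
        = 0 := by
      refine coeff_eq_zero_of_natDegree_lt ?_
      have e1 : p * (k - p - 2) ≤ p * (2 * l - p - 2) := Nat.mul_le_mul_left p (by omega)
      have e2 : l * p ≤ p * p := Nat.mul_le_mul_right p hlp
      have e3 : p * (2 * l - p - 2) + (p * p + 2 * p) = 2 * (l * p) := by
        zify [show p + 2 ≤ 2 * l by omega, show p ≤ 2 * l by omega, show 2 ≤ 2*l - p by omega]
        ring
      calc ((((X : (ZMod p)[X]) ^ p - 1) ^ (k - p - 2)) * (X - 1) ^ (2 * p + 1 - k)).natDegree
          ≤ p * (k - p - 2) + (2 * p + 1 - k) :=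
            (natDegree_mul_le).trans (Nat.add_le_add (natDegree_Xp_pow_le _)
              (natDegree_sub_one_pow_le _))
        _ < l * p := by omega
    rw [hG, sub_zero, mul_comm ((X : (ZMod p)[X]) ^ (p * p)), coeff_mul_X_pow']
    rcases eq_or_lt_of_le hlp with rfl | hlt
    · -- l = p (p has been substituted by l)
      rw [if_pos le_rfl, Nat.sub_self, coeff_zero_eq_eval_zero]
      have hkm : (k - 1) % l = k - 1 - l := (moddiv (by omega) (by omega)).1
      have hkd : (k - 1) / l = 1 := (moddiv (by omega) (by omega)).2
      rw [lucas_zmod (k-1) l, hkm, hkd, Nat.mod_self, Nat.div_self (by omega : 0 < l),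
        Nat.choose_zero_right, Nat.choose_self]
      simp only [eval_mul, eval_pow, eval_sub, eval_one, eval_X]
      rw [zero_pow (by omega : l ≠ 0)]
      have h01 : (0 - 1 : ZMod l) = -1 := by ring
      rw [h01, ← pow_add]
      have hexp : k - l - 2 + (2 * l + 1 - k) = l - 1 := by omega
      rw [hexp, Even.neg_one_pow (Nat.Odd.sub_odd hodd odd_one),
        Even.neg_one_pow (⟨l, rfl⟩ : Even (l + l))]
      norm_num
    · -- l < p
      rw [if_neg (by
        intro hcon
        have h5 : l * p < p * p := (Nat.mul_lt_mul_right (show 0 < p by omega)).mpr hlt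
        omega)]
      have hkm : (k - 1) % p = k - 1 - p := (moddiv (by omega) (by omega)).1
      have hkd : (k - 1) / p = 1 := (moddiv (by omega) (by omega)).2
      rw [lucas_zmod (k-1) l, hkm, hkd, Nat.mod_eq_of_lt hlt, Nat.div_eq_of_lt hlt,
        Nat.choose_zero_right, Nat.choose_eq_zero_of_lt (show k - 1 - p < l by omega)]
      push_cast; ring

lemma skel {p : ℕ} [Fact p.Prime] (l : ℕ) :
    ((1 - X) * (((X : (ZMod p)[X]) - 1) ^ (p - 1) - 1) ^ (2 * l)).coeff (l * p)
      = ∑ k ∈ range (2 * l + 1), (-1) ^ (k + 1) * ((2 * l).choose k : ZMod p) *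
          ((((X : (ZMod p)[X]) - 1)) ^ (k * (p - 1) + 1)).coeff (l * p) := by
  rw [sub_pow, Finset.mul_sum, finset_sum_coeff]
  refine Finset.sum_congr rfl fun k hk => ?_
  have hsg : (-1 : (ZMod p)[X]) ^ (k + 2 * l) = (-1) ^ k := by
    rw [pow_add, (show ((-1 : (ZMod p)[X])) ^ (2 * l) = 1 from Even.neg_one_pow ⟨l, by ring⟩),
      mul_one]
  have e1 : ((X - 1 : (ZMod p)[X]) ^ (p - 1)) ^ k = (X - 1) ^ (k * (p - 1)) := by
    rw [← pow_mul, mul_comm]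
  have h1 : (1 - X : (ZMod p)[X]) *
        ((-1) ^ (k + 2 * l) * ((X - 1) ^ (p - 1)) ^ k * 1 ^ (2 * l - k)
          * ((2 * l).choose k : (ZMod p)[X]))
      = C ((-1) ^ (k + 1) * ((2 * l).choose k : ZMod p)) * (X - 1) ^ (k * (p - 1) + 1) := by
    rw [map_mul, map_pow, map_neg, map_one, C_eq_natCast, hsg, e1,
      pow_succ ((X - 1 : (ZMod p)[X])) (k * (p - 1)), pow_succ (-1 : (ZMod p)[X]) k]
    ring
  rw [h1, coeff_C_mul]

lemma key_lep {p l : ℕ} [Fact p.Prime] (hodd : Odd p) (hl2 : 2 ≤ l) (hlp : l ≤ p) :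
    ((1 - X) * (((X : (ZMod p)[X]) - 1) ^ (p - 1) - 1) ^ (2 * l)).coeff (l * p) = -1 := by
  rw [skel]
  have h1 : ∀ k ∈ range (2 * l + 1),
      (-1 : ZMod p) ^ (k + 1) * ((2 * l).choose k : ZMod p) *
          ((((X : (ZMod p)[X]) - 1)) ^ (k * (p - 1) + 1)).coeff (l * p)
        = (-1) ^ (p + l) *
            -((-1) ^ k * ((2 * l).choose k : ZMod p) * ((k - 1).choose l : ZMod p)) := by
    intro k hk
    rw [C1 hodd hl2 hlp (by simpa using Nat.lt_succ_iff.mp (mem_range.mp hk))]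
    rw [pow_succ]
    ring
  rw [Finset.sum_congr rfl h1, ← Finset.mul_sum, Finset.sum_neg_distrib]
  have hZ := Tsum (2 * l) (l - 1) l (by omega) (by omega)
  have hZc : ∑ k ∈ range (2 * l + 1),
      (-1 : ZMod p) ^ k * ((2 * l).choose k : ZMod p) * ((k - 1).choose l : ZMod p)
        = (-1) ^ (l + 1) := by
    have := congrArg (Int.cast : ℤ → ZMod p) hZ
    push_cast at this
    exact this
  rw [hZc]
  have h2 : (-1 : ZMod p) ^ (p + l) * -(-1 : ZMod p) ^ (l + 1) = (-1) ^ (p + 2 * (l + 1)) := by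
    have : p + 2 * (l + 1) = (p + l) + (l + 1) + 1 := by omega
    rw [this, pow_add, pow_add, pow_one]
    ring
  rw [h2, pow_add, pow_mul]
  have h3 : ((-1 : ZMod p) ^ 2) ^ (l + 1) = 1 := by norm_num
  rw [h3, mul_one]
  exact Odd.neg_one_pow hodd

lemma A_le {p k : ℕ} [Fact p.Prime] (hk : k ≤ p + 1) :
    (((X : (ZMod p)[X]) - 1) ^ (k * (p - 1) + 1)).coeff ((p + 1) * p) = 0 := by
  have hp2 : 2 ≤ p := (Fact.out : p.Prime).two_le
  refine coeff_eq_zero_of_natDegree_lt (lt_of_le_of_lt (natDegree_sub_one_pow_le _) ?_)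
  have e1 : k * (p - 1) ≤ (p + 1) * (p - 1) := Nat.mul_le_mul_right _ hk
  have e2 : (p + 1) * (p - 1) + 1 = p * p := by
    zify [show 1 ≤ p by omega]; ring
  have e3 : (p + 1) * p = p * p + p := by ring
  omega

lemma A_mid {p k : ℕ} [Fact p.Prime] (hodd : Odd p) (h1 : p + 2 ≤ k) (h2 : k ≤ 2 * p + 1) :
    (((X : (ZMod p)[X]) - 1) ^ (k * (p - 1) + 1)).coeff ((p + 1) * p)
      = -((k - p - 2 : ℕ) : ZMod p) := by
  have hp2 : 2 ≤ p := (Fact.out : p.Prime).two_le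
  have hpp : (p + 1) * p = p * p + p := by ring
  have hd : k * (p - 1) + 1 = p * p + (p * (k - p - 2) + (2 * p + 1 - k)) := by
    zify [show 1 ≤ p by omega, show p ≤ k by omega, show 2 ≤ k - p by omega,
      show k ≤ 2*p+1 by omega]
    ring
  have hXps : ((X : (ZMod p)[X]) - 1) ^ (p * (k - p - 2)) = (X ^ p - 1) ^ (k - p - 2) := by
    rw [pow_mul, sub_one_pow_p]
  rw [hd, pow_add, pow_add, sub_one_pow_p2, hXps, sub_mul, one_mul, coeff_sub]
  have hG : ((((X : (ZMod p)[X]) ^ p - 1) ^ (k - p - 2)) * (X - 1) ^ (2 * p + 1 - k)).coeff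
      ((p + 1) * p) = 0 := by
    refine coeff_eq_zero_of_natDegree_lt ?_
    have e1 : p * (k - p - 2) ≤ p * (p - 1) := Nat.mul_le_mul_left p (by omega)
    have e2 : p * (p - 1) + p = p * p := by zify [show 1 ≤ p by omega]; ring
    calc ((((X : (ZMod p)[X]) ^ p - 1) ^ (k - p - 2)) * (X - 1) ^ (2 * p + 1 - k)).natDegree
        ≤ p * (k - p - 2) + (2 * p + 1 - k) :=
          (natDegree_mul_le).trans (Nat.add_le_add (natDegree_Xp_pow_le _)
            (natDegree_sub_one_pow_le _))
      _ < (p + 1) * p := by omega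
  rw [hG, sub_zero, mul_comm ((X : (ZMod p)[X]) ^ (p * p)), coeff_mul_X_pow',
    if_pos (by omega : p * p ≤ (p + 1) * p), (by omega : (p + 1) * p - p * p = p),
    coeff_pow_sub_one_mul, Finset.sum_eq_single 1]
  · rw [if_pos (by omega : p * 1 ≤ p), Nat.choose_one_right, (by omega : p - p * 1 = 0),
      coeff_sub_one_pow, Nat.sub_zero, Nat.choose_zero_right]
    have hsg : (-1 : ZMod p) ^ (1 + (k - p - 2)) * (-1) ^ (2 * p + 1 - k) = -1 := by
      rw [← pow_add, (show 1 + (k - p - 2) + (2 * p + 1 - k) = p by omega)]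
      exact Odd.neg_one_pow hodd
    rw [Nat.cast_one, mul_one]
    linear_combination (((k - p - 2 : ℕ) : ZMod p)) * hsg
  · intro i hi hne
    rcases Nat.eq_zero_or_pos i with rfl | hi0
    · rw [if_pos (by simp), Nat.mul_zero, Nat.sub_zero, coeff_sub_one_pow,
        Nat.choose_eq_zero_of_lt (by omega : 2 * p + 1 - k < p)]
      push_cast; ring
    · have hi2 : 2 ≤ i := by omega
      rw [if_neg (by
        have h6 : p * 2 ≤ p * i := Nat.mul_le_mul_left p hi2
        omega)]
      ring
  · intro hmem
    simp only [mem_range] at hmem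
    rw [Nat.choose_one_right, (show k - p - 2 = 0 by omega)]
    simp

lemma A_top {p : ℕ} [Fact p.Prime] (hodd : Odd p) (hp3 : 3 ≤ p) :
    (((X : (ZMod p)[X]) - 1) ^ ((2 * p + 2) * (p - 1) + 1)).coeff ((p + 1) * p) = 1 := by
  have hpp : (p + 1) * p = p * p + p := by ring
  have hd : (2 * p + 2) * (p - 1) + 1 = p * p + (p * (p - 1) + (p - 1)) := by
    zify [show 1 ≤ p by omega]; ring
  have hXps : ((X : (ZMod p)[X]) - 1) ^ (p * (p - 1)) = (X ^ p - 1) ^ (p - 1) := by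
    rw [pow_mul, sub_one_pow_p]
  rw [hd, pow_add, pow_add, sub_one_pow_p2, hXps, sub_mul, one_mul, coeff_sub]
  have hG : ((((X : (ZMod p)[X]) ^ p - 1) ^ (p - 1)) * (X - 1) ^ (p - 1)).coeff
      ((p + 1) * p) = 0 := by
    refine coeff_eq_zero_of_natDegree_lt ?_
    have e2 : p * (p - 1) + p = p * p := by zify [show 1 ≤ p by omega]; ring
    calc ((((X : (ZMod p)[X]) ^ p - 1) ^ (p - 1)) * (X - 1) ^ (p - 1)).natDegree
        ≤ p * (p - 1) + (p - 1) :=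
          (natDegree_mul_le).trans (Nat.add_le_add (natDegree_Xp_pow_le _)
            (natDegree_sub_one_pow_le _))
      _ < (p + 1) * p := by omega
  rw [hG, sub_zero, mul_comm ((X : (ZMod p)[X]) ^ (p * p)), coeff_mul_X_pow',
    if_pos (by omega : p * p ≤ (p + 1) * p), (by omega : (p + 1) * p - p * p = p),
    coeff_pow_sub_one_mul, Finset.sum_eq_single 1]
  · rw [if_pos (by omega : p * 1 ≤ p), Nat.choose_one_right, (by omega : p - p * 1 = 0),
      coeff_sub_one_pow, Nat.sub_zero, Nat.choose_zero_right]
    have hsg1 : (-1 : ZMod p) ^ (1 + (p - 1)) = -1 := by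
      rw [(show 1 + (p - 1) = p by omega)]
      exact Odd.neg_one_pow hodd
    have hsg2 : (-1 : ZMod p) ^ (p - 1) = 1 := Even.neg_one_pow (Nat.Odd.sub_odd hodd odd_one)
    have hcast : ((p - 1 : ℕ) : ZMod p) = -1 := by
      rw [Nat.cast_sub (by omega), ZMod.natCast_self, Nat.cast_one]
      ring
    rw [hsg1, hsg2, hcast, Nat.cast_one, mul_one]
    ring
  · intro i hi hne
    rcases Nat.eq_zero_or_pos i with rfl | hi0
    · rw [if_pos (by simp), Nat.mul_zero, Nat.sub_zero, coeff_sub_one_pow,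
        Nat.choose_eq_zero_of_lt (by omega : p - 1 < p)]
      push_cast; ring
    · have hi2 : 2 ≤ i := by omega
      rw [if_neg (by
        have h6 : p * 2 ≤ p * i := Nat.mul_le_mul_left p hi2
        omega)]
      ring
  · intro hmem
    simp only [mem_range] at hmem
    omega

lemma key_lp1 {p : ℕ} [Fact p.Prime] (hodd : Odd p) (hp3 : 3 ≤ p) :
    ((1 - X) * (((X : (ZMod p)[X]) - 1) ^ (p - 1) - 1) ^ (2 * (p + 1))).coeff ((p + 1) * p)
      = -1 := by
  rw [skel (p := p) (p + 1)]
  have hN : 2 * (p + 1) + 1 = (2 * p) + 1 + 1 + 1 := by ring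
  rw [hN, Finset.sum_range_succ, Finset.sum_range_succ, Finset.sum_range_succ]
  have hzero : ∑ k ∈ range (2 * p), (-1 : ZMod p) ^ (k + 1) * ((2 * (p + 1)).choose k : ZMod p) *
      (((X : (ZMod p)[X]) - 1) ^ (k * (p - 1) + 1)).coeff ((p + 1) * p) = 0 := by
    refine Finset.sum_eq_zero fun k hk => ?_
    have hk2p : k < 2 * p := mem_range.mp hk
    rcases le_or_gt k (p + 1) with h | h
    · rw [A_le h, mul_zero]
    · rcases eq_or_lt_of_le (show p + 2 ≤ k by omega) with heq | hgt
      · rw [A_mid hodd (le_of_eq heq) (by omega), (show k - p - 2 = 0 from by omega)]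
        simp
      · have h22 : 2 * (p + 1) = 2 + 2 * p := by ring
        have hbin : (((2 * (p + 1)).choose k : ℕ) : ZMod p) = 0 := by
          have hm : (2 * (p + 1)) % p = 2 := by
            rw [h22, Nat.add_mul_mod_self_right, Nat.mod_eq_of_lt (by omega)]
          have hd2 : (2 * (p + 1)) / p = 2 := by
            rw [h22, Nat.add_mul_div_right _ _ (by omega : 0 < p), Nat.div_eq_of_lt (by omega)]
          have hkm : k % p = k - p := (moddiv (by omega) (by omega)).1
          have hkd : k / p = 1 := (moddiv (by omega) (by omega)).2
          rw [lucas_zmod, hm, hd2, hkm, hkd, Nat.choose_eq_zero_of_lt (by omega : 2 < k - p)]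
          simp
        rw [hbin]
        ring
  rw [hzero, zero_add]
  have hA1 := A_mid (p := p) (k := 2 * p) hodd (by omega) (by omega)
  have hA2 := A_mid (p := p) (k := 2 * p + 1) hodd (by omega) (by omega)
  have hA3 := A_top hodd hp3
  rw [(show 2 * p - p - 2 = p - 2 from by omega)] at hA1
  rw [(show 2 * p + 1 - p - 2 = p - 1 from by omega)] at hA2
  rw [hA1, hA2, (show (2 * p + 1 + 1) = 2 * p + 2 from rfl), hA3]
  have hb1 : (((2 * (p + 1)).choose (2 * p) : ℕ) : ZMod p) = 1 := by
    have hm2 : (2 * (p + 1)) % p = 2 := by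
      rw [(show 2 * (p + 1) = 2 + 2 * p from by ring), Nat.add_mul_mod_self_right,
        Nat.mod_eq_of_lt (by omega)]
    have hd2 : (2 * (p + 1)) / p = 2 := by
      rw [(show 2 * (p + 1) = 2 + 2 * p from by ring),
        Nat.add_mul_div_right _ _ (by omega : 0 < p), Nat.div_eq_of_lt (by omega)]
    have hm : (2 * p) % p = 0 := by simp
    have hd' : (2 * p) / p = 2 := by
      rw [Nat.mul_div_assoc 2 (dvd_refl p), Nat.div_self (by omega : 0 < p), mul_one]
    rw [lucas_zmod, hm2, hd2, hm, hd', Nat.choose_zero_right, Nat.choose_self]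
    simp
  have hb2 : (((2 * (p + 1)).choose (2 * p + 1) : ℕ) : ZMod p) = 2 := by
    have hm2 : (2 * (p + 1)) % p = 2 := by
      rw [(show 2 * (p + 1) = 2 + 2 * p from by ring), Nat.add_mul_mod_self_right,
        Nat.mod_eq_of_lt (by omega)]
    have hd2 : (2 * (p + 1)) / p = 2 := by
      rw [(show 2 * (p + 1) = 2 + 2 * p from by ring),
        Nat.add_mul_div_right _ _ (by omega : 0 < p), Nat.div_eq_of_lt (by omega)]
    have hm : (2 * p + 1) % p = 1 := by
      rw [(show 2 * p + 1 = 1 + 2 * p from by ring), Nat.add_mul_mod_self_right,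
        Nat.mod_eq_of_lt (by omega)]
    have hd' : (2 * p + 1) / p = 2 := by
      rw [(show 2 * p + 1 = 1 + 2 * p from by ring),
        Nat.add_mul_div_right _ _ (by omega : 0 < p), Nat.div_eq_of_lt (by omega)]
    rw [lucas_zmod, hm2, hd2, hm, hd', Nat.choose_self]
    norm_num
  have hb3 : (((2 * (p + 1)).choose (2 * p + 2) : ℕ) : ZMod p) = 1 := by
    rw [(show 2 * (p + 1) = 2 * p + 2 from by ring), Nat.choose_self, Nat.cast_one]
  rw [hb1, hb2, hb3]
  have hc2 : ((p - 2 : ℕ) : ZMod p) = -2 := by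
    rw [Nat.cast_sub (by omega), ZMod.natCast_self]
    push_cast; ring
  have hc1 : ((p - 1 : ℕ) : ZMod p) = -1 := by
    rw [Nat.cast_sub (by omega), ZMod.natCast_self]
    push_cast; ring
  rw [hc2, hc1]
  have hs1 : (-1 : ZMod p) ^ (2 * p + 1) = -1 := Odd.neg_one_pow ⟨p, by ring⟩
  have hs2 : (-1 : ZMod p) ^ (2 * p + 1 + 1) = 1 := Even.neg_one_pow ⟨p + 1, by ring⟩
  have hs3 : (-1 : ZMod p) ^ (2 * p + 2 + 1) = -1 := Odd.neg_one_pow ⟨p + 1, by ring⟩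
  rw [hs1, hs2, hs3]
  ring

lemma key_p2 (l : ℕ) :
    ((1 - X) * (((X : (ZMod 2)[X]) - 1) ^ (2 - 1) - 1) ^ (2 * l)).coeff (l * 2) = -1 := by
  have hX : ((X : (ZMod 2)[X]) - 1) ^ (2 - 1) - 1 = X := by
    rw [pow_one, sub_sub]
    have : (1 + 1 : (ZMod 2)[X]) = C (1 + 1) := by rw [map_add, map_one]
    rw [this, (show (1 + 1 : ZMod 2) = 0 from by decide), map_zero, sub_zero]
  rw [hX, sub_mul, one_mul, coeff_sub, ← pow_succ', coeff_X_pow, coeff_X_pow,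
    if_pos (by omega : l * 2 = 2 * l), if_neg (by omega : ¬ l * 2 = 2 * l + 1)]
  decide

lemma key (p l : ℕ) [Fact p.Prime] (hl2 : 2 ≤ l) (hlp : l ≤ p + 1) :
    ((1 - X) * (((X : (ZMod p)[X]) - 1) ^ (p - 1) - 1) ^ (2 * l)).coeff (l * p) = -1 := by
  rcases eq_or_ne p 2 with rfl | hp2
  · exact key_p2 l
  · have hodd : Odd p := (Fact.out : p.Prime).odd_of_ne_two hp2
    have hp3 : 3 ≤ p := by
      have := (Fact.out : p.Prime).two_le
      omega
    rcases eq_or_lt_of_le hlp with rfl | hlt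
    · exact key_lp1 hodd hp3
    · exact key_lep hodd hl2 (by omega)

theorem v_lp_add (p l : ℕ) (hp : p.Prime) (hl2 : 2 ≤ l) (hlp : l ≤ p + 1) :
    v (l * p + 1) ≡ -1 [ZMOD (p : ℤ)] ∧ v (l * p + 2) ≡ -1 [ZMOD (p : ℤ)] := by
  have : Fact p.Prime := ⟨hp⟩
  have hp2 : 2 ≤ p := hp.two_le
  set φ := Int.castRingHom (ZMod p) with hφ
  have hQ : ∀ (q : ℤ[X]) (m : ℕ), ((q.coeff m : ℤ) : ZMod p) = (q.map φ).coeff m := by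
    intro q m
    rw [coeff_map]
    simp [hφ]
  have hm1 : ((-1 : ℤ) : ZMod p) = -1 := by push_cast; ring
  constructor
  · unfold v
    rw [if_neg (by omega)]
    refine (ZMod.intCast_eq_intCast_iff _ _ _).mp ?_
    rw [hQ, hm1, (show (l * p + 1 : ℕ) - 1 = l * p from by omega),
      (show 2 * (l * p + 1) - 2 = 2 * (l * p) from by omega),
      (show 2 * (l * p) = 2 * l * p from by ring)]
    rw [Polynomial.map_mul, Polynomial.map_sub, Polynomial.map_one, map_X, Polynomial.map_prod]
    have hfac : ∀ j ∈ Finset.range (2 * l * p),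
        ((C ((2 * ((l * p + 1 : ℕ) : ℤ)) - 3 - (j : ℤ)) + C (j : ℤ) * X).map φ)
          = (fun a : ZMod p => C (-1 - a) + C a * X) ((j : ℕ) : ZMod p) := by
      intro j _
      rw [Polynomial.map_add, Polynomial.map_mul, map_C, map_C, map_X]
      have h1 : φ ((2 * ((l * p + 1 : ℕ) : ℤ)) - 3 - (j : ℤ)) = -1 - ((j : ℕ) : ZMod p) := by
        simp only [hφ, map_sub, map_mul, map_ofNat, eq_intCast]
        push_cast [ZMod.natCast_self]
        ring
      have h2 : φ ((j : ℤ)) = ((j : ℕ) : ZMod p) := by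
        simp [hφ]
      rw [h1, h2]
    rw [Finset.prod_congr rfl hfac, (show 2 * l * p = (2 * l) * p from by ring),
      prod_range_mul_p p (fun a : ZMod p => C (-1 - a) + C a * X) (2 * l), prod_neg_one]
    exact key p l hl2 hlp
  · unfold v
    rw [if_neg (by omega)]
    refine (ZMod.intCast_eq_intCast_iff _ _ _).mp ?_
    rw [hQ, hm1, (show (l * p + 2 : ℕ) - 1 = l * p + 1 from by omega),
      (show 2 * (l * p + 2) - 2 = 2 * (l * p) + 2 from by omega),
      (show 2 * (l * p) = 2 * l * p from by ring)]
    rw [Polynomial.map_mul, Polynomial.map_sub, Polynomial.map_one, map_X, Polynomial.map_prod]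
    have hfac : ∀ j ∈ Finset.range (2 * l * p + 2),
        ((C ((2 * ((l * p + 2 : ℕ) : ℤ)) - 3 - (j : ℤ)) + C (j : ℤ) * X).map φ)
          = (fun a : ZMod p => C (1 - a) + C a * X) ((j : ℕ) : ZMod p) := by
      intro j _
      rw [Polynomial.map_add, Polynomial.map_mul, map_C, map_C, map_X]
      have h1 : φ ((2 * ((l * p + 2 : ℕ) : ℤ)) - 3 - (j : ℤ)) = 1 - ((j : ℕ) : ZMod p) := by
        simp only [hφ, map_sub, map_mul, map_ofNat, eq_intCast]
        push_cast [ZMod.natCast_self]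
        ring
      have h2 : φ ((j : ℤ)) = ((j : ℕ) : ZMod p) := by
        simp [hφ]
      rw [h1, h2]
    rw [Finset.prod_congr rfl hfac, Finset.prod_range_succ, Finset.prod_range_succ]
    have hg1 : (fun a : ZMod p => C (1 - a) + C a * X) ((2 * l * p : ℕ) : ZMod p) = 1 := by
      simp only
      push_cast [ZMod.natCast_self]
      norm_num
    have hg2 : (fun a : ZMod p => C (1 - a) + C a * X) ((2 * l * p + 1 : ℕ) : ZMod p) = X := by
      simp only
      push_cast [ZMod.natCast_self]
      norm_num
    rw [hg1, hg2, mul_one, (show 2 * l * p = (2 * l) * p from by ring),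
      prod_range_mul_p p (fun a : ZMod p => C (1 - a) + C a * X) (2 * l), prod_pos_one]
    have hneg : ((1 : (ZMod p)[X]) - (X - 1) ^ (p - 1)) ^ (2 * l)
        = (((X : (ZMod p)[X]) - 1) ^ (p - 1) - 1) ^ (2 * l) := by
      rw [(show (1 : (ZMod p)[X]) - (X - 1) ^ (p - 1) = -((X - 1) ^ (p - 1) - 1) from by ring),
        Even.neg_pow ⟨l, by ring⟩]
    rw [hneg, (show (1 - X) * ((((X : (ZMod p)[X]) - 1) ^ (p - 1) - 1) ^ (2 * l) * X)
        = ((1 - X) * (((X : (ZMod p)[X]) - 1) ^ (p - 1) - 1) ^ (2 * l)) * X from by ring),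
      coeff_mul_X]
    exact key p l hl2 hlp
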